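/- Asymptotic central charge of the Virasoro algebra at extremal weight h → 1/2: for every integer n ≥ 2, λ_n(1/2) = 4n + 2, the function h ↦ λ_n(h) is differentiable at h = 1/2, and the derivatives c_n := λ_n'(1/2) satisfy lim_{n→∞} c_n = 4 = (2/3)·(2³ − 2); moreover the sequence (c_n − 4)_{n≥2} is square-summable. Thus, modulo Hilbert–Schmidt (square-summable diagonal) corrections, for h = 1/2 + ℏ the first-order term in ℏ of [L₂, L₋₂] beyond its value at ℏ = 0 is 4ℏ·id, which corresponds to the Virasoro relation [L₂, L₋₂] = 4L₀ + ((2³−2)/12)·c with asymptotic central charge c = 8ℏ. -/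

import Mathlib

noncomputable section

/-- The eigenvalue `λₙ(h)` of the commutator `[L₂, L₋₂]` on the monomial `zⁿ` in the Verma
module `V_h`:
`λₙ(h) = (n+3h)²(n+1)(n+2)/((n+2h)(n+2h+1)) − (n+3h−2)²·n·(n−1)/((n+2h−1)(n+2h−2))`. -/
def lam (h : ℝ) (n : ℕ) : ℝ :=
  ((n : ℝ) + 3 * h) ^ 2 * ((n : ℝ) + 1) * ((n : ℝ) + 2) /
      (((n : ℝ) + 2 * h) * ((n : ℝ) + 2 * h + 1)) -
    ((n : ℝ) + 3 * h - 2) ^ 2 * (n : ℝ) * ((n : ℝ) - 1) /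
      (((n : ℝ) + 2 * h - 1) * ((n : ℝ) + 2 * h - 2))

/-- closed form of the derivative -/
def dval (c : ℝ) : ℝ := 4 + (1/(c-1) + 1/c - 1/(c+1) - 1/(c+2))/2

lemma lam_hasDerivAt (n : ℕ) (hn : 2 ≤ n) :
    HasDerivAt (fun h : ℝ => lam h n) (dval (n : ℝ)) (1/2) := by
  set c : ℝ := (n : ℝ) with hcdef
  have hc : (2:ℝ) ≤ c := by rw [hcdef]; exact_mod_cast hn
  have h0 : c ≠ 0 := by nlinarith
  have h1 : c - 1 ≠ 0 := by nlinarith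
  have h2 : c + 1 ≠ 0 := by nlinarith
  have h3 : c + 2 ≠ 0 := by nlinarith
  -- affine pieces
  have a1 : HasDerivAt (fun h : ℝ => c + 3 * h) 3 (1/2) := by
    simpa using ((hasDerivAt_id (1/2 : ℝ)).const_mul 3).const_add c
  have a2 : HasDerivAt (fun h : ℝ => c + 2 * h) 2 (1/2) := by
    simpa using ((hasDerivAt_id (1/2 : ℝ)).const_mul 2).const_add c
  have a3 : HasDerivAt (fun h : ℝ => c + 2 * h + 1) 2 (1/2) := a2.add_const 1
  have a4 : HasDerivAt (fun h : ℝ => c + 3 * h - 2) 3 (1/2) := a1.sub_const 2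
  have a5 : HasDerivAt (fun h : ℝ => c + 2 * h - 1) 2 (1/2) := a2.sub_const 1
  have a6 : HasDerivAt (fun h : ℝ => c + 2 * h - 2) 2 (1/2) := a2.sub_const 2
  have num1 : HasDerivAt (fun h : ℝ => (c + 3*h)^2 * ((c+1)*(c+2)))
      ((2 * (c + 3*(1/2:ℝ))^1 * 3) * ((c+1)*(c+2))) (1/2) := (a1.pow 2).mul_const _
  have den1 : HasDerivAt (fun h : ℝ => (c + 2*h) * (c + 2*h + 1))
      (2 * (c + 2*(1/2:ℝ) + 1) + (c + 2*(1/2:ℝ)) * 2) (1/2) := a2.mul a3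
  have num2 : HasDerivAt (fun h : ℝ => (c + 3*h - 2)^2 * (c*(c-1)))
      ((2 * (c + 3*(1/2:ℝ) - 2)^1 * 3) * (c*(c-1))) (1/2) := (a4.pow 2).mul_const _
  have den2 : HasDerivAt (fun h : ℝ => (c + 2*h - 1) * (c + 2*h - 2))
      (2 * (c + 2*(1/2:ℝ) - 2) + (c + 2*(1/2:ℝ) - 1) * 2) (1/2) := a5.mul a6
  have hd1 : (c + 2*(1/2:ℝ)) * (c + 2*(1/2:ℝ) + 1) ≠ 0 := by
    have : (0:ℝ) < (c + 2*(1/2)) * (c + 2*(1/2) + 1) := by nlinarith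
    exact this.ne'
  have hd2 : (c + 2*(1/2:ℝ) - 1) * (c + 2*(1/2:ℝ) - 2) ≠ 0 := by
    have : (0:ℝ) < (c + 2*(1/2) - 1) * (c + 2*(1/2) - 2) := by nlinarith
    exact this.ne'
  have q1 := num1.div den1 hd1
  have q2 := num2.div den2 hd2
  have key := q1.sub q2
  have heq : (fun h : ℝ => lam h n) =
      (fun h : ℝ => (c + 3*h)^2 * ((c+1)*(c+2)) / ((c + 2*h) * (c + 2*h + 1)) -
        (c + 3*h - 2)^2 * (c*(c-1)) / ((c + 2*h - 1) * (c + 2*h - 2))) := by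
    funext h; simp only [lam, ← hcdef]; ring
  rw [heq]
  convert key using 1
  case e'_4 => rfl
  case e'_5 => rfl
  case e'_8 => rfl
  have hD1 : (c + 2*(1/2:ℝ)) * (c + 2*(1/2) + 1) = (c+1)*(c+2) := by ring
  have hD2 : (c + 2*(1/2:ℝ) - 1) * (c + 2*(1/2) - 2) = c*(c-1) := by ring
  rw [hD1, hD2, dval]
  field_simp
  ring

lemma deriv_lam (n : ℕ) (hn : 2 ≤ n) :
    deriv (fun h : ℝ => lam h n) (1/2) = dval (n : ℝ) :=
  (lam_hasDerivAt n hn).deriv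


section more
lemma lam_val (n : ℕ) (hn : 2 ≤ n) : lam (1/2) n = 4 * (n : ℝ) + 2 := by
  set c : ℝ := (n : ℝ) with hcdef
  have hc : (2:ℝ) ≤ c := by rw [hcdef]; exact_mod_cast hn
  have h0 : c ≠ 0 := by nlinarith
  have h1 : c - 1 ≠ 0 := by nlinarith
  have h2 : c + 1 ≠ 0 := by nlinarith
  have h3 : c + 2 ≠ 0 := by nlinarith
  have hD1 : (c + 2*(1/2:ℝ)) * (c + 2*(1/2) + 1) = (c+1)*(c+2) := by ring
  have hD2 : (c + 2*(1/2:ℝ) - 1) * (c + 2*(1/2) - 2) = c*(c-1) := by ring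
  simp only [lam, ← hcdef]
  rw [hD1, hD2]
  field_simp
  ring

lemma tend_inv (a : ℝ) :
    Filter.Tendsto (fun n : ℕ => 1 / ((n : ℝ) + a)) Filter.atTop (nhds 0) := by
  simp only [one_div]
  exact (Filter.tendsto_atTop_add_const_right Filter.atTop a
    tendsto_natCast_atTop_atTop).inv_tendsto_atTop

lemma tend_dval : Filter.Tendsto (fun n : ℕ => dval (n : ℝ)) Filter.atTop (nhds 4) := by
  have h := ((((tend_inv (-1)).add (tend_inv 0)).sub (tend_inv 1)).sub
    (tend_inv 2)).div_const 2 |>.const_add 4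
  simp only [add_zero, add_neg_cancel, sub_zero, zero_div] at h
  convert h using 2 with n
  simp [dval, sub_eq_add_neg]

lemma dval_bounds (n : ℕ) :
    0 ≤ dval ((n:ℝ) + 2) - 4 ∧ dval ((n:ℝ) + 2) - 4 ≤ 1 / ((n:ℝ) + 1) := by
  have c0 : (0:ℝ) ≤ (n:ℝ) := Nat.cast_nonneg n
  have p1 : (0:ℝ) < (n:ℝ) + 1 := by linarith
  have p2 : (0:ℝ) < (n:ℝ) + 2 := by linarith
  have p3 : (0:ℝ) < (n:ℝ) + 3 := by linarith
  have p4 : (0:ℝ) < (n:ℝ) + 4 := by linarith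
  have e : dval ((n:ℝ) + 2) - 4 =
      (1/((n:ℝ)+1) + 1/((n:ℝ)+2) - 1/((n:ℝ)+3) - 1/((n:ℝ)+4))/2 := by
    simp only [dval]; ring_nf
  have b1 : 1/((n:ℝ)+3) ≤ 1/((n:ℝ)+1) := one_div_le_one_div_of_le p1 (by linarith)
  have b2 : 1/((n:ℝ)+4) ≤ 1/((n:ℝ)+2) := one_div_le_one_div_of_le p2 (by linarith)
  have b3 : 1/((n:ℝ)+2) ≤ 1/((n:ℝ)+1) := one_div_le_one_div_of_le p1 (by linarith)
  have b4 : 0 < 1/((n:ℝ)+3) := by positivity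
  have b5 : 0 < 1/((n:ℝ)+4) := by positivity
  rw [e]
  constructor <;> linarith

lemma summable_sq :
    Summable (fun n : ℕ => (dval ((n:ℝ) + 2) - 4) ^ 2) := by
  have hbase : Summable (fun n : ℕ => (1 / ((n:ℝ) + 1)) ^ 2) := by
    have h := Real.summable_one_div_nat_pow.mpr (le_refl 2)
    have := (summable_nat_add_iff 1).mpr h
    simpa [Nat.cast_add] using this
  refine Summable.of_nonneg_of_le (fun n => sq_nonneg _) (fun n => ?_) hbase
  obtain ⟨h0, h1⟩ := dval_bounds n
  exact pow_le_pow_left₀ h0 h1 2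
end more

/-- asymptotic central charge at `h → 1/2`: for every `n ≥ 2`,
`λₙ(1/2) = 4n+2` and `h ↦ λₙ(h)` is differentiable at `1/2`; the derivatives
`cₙ = λₙ'(1/2)` tend to `4 = (2/3)(2³−2)` and `(cₙ − 4)_{n≥2}` is square-summable
(a Hilbert–Schmidt diagonal correction), giving asymptotic central charge `c = 8ℏ`. -/
theorem stmt_18 :
    (∀ n : ℕ, 2 ≤ n →
      lam (1 / 2) n = 4 * (n : ℝ) + 2 ∧
      DifferentiableAt ℝ (fun h : ℝ => lam h n) (1 / 2)) ∧
    Filter.Tendsto (fun n : ℕ => deriv (fun h : ℝ => lam h n) (1 / 2))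
      Filter.atTop (nhds 4) ∧
    (4 : ℝ) = 2 / 3 * (2 ^ 3 - 2) ∧
    Summable (fun n : ℕ => (deriv (fun h : ℝ => lam h (n + 2)) (1 / 2) - 4) ^ 2) := by
  refine ⟨fun n hn => ⟨lam_val n hn, (lam_hasDerivAt n hn).differentiableAt⟩, ?_, by norm_num, ?_⟩
  · refine tend_dval.congr' ?_
    filter_upwards [Filter.eventually_ge_atTop 2] with n hn
    exact (deriv_lam n hn).symm
  · have heq : (fun n : ℕ => (deriv (fun h : ℝ => lam h (n + 2)) (1 / 2) - 4) ^ 2) =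
        fun n : ℕ => (dval ((n:ℝ) + 2) - 4) ^ 2 := by
      funext n
      rw [deriv_lam (n + 2) (by omega)]
      push_cast
      ring_nf
    rw [heq]
    exact summable_sq

end
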